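/- arXiv:1605.05274 — 4 statements merged into one kernel-verified Lean document; each statement's English description precedes it below -/
import Mathlib

section
/- For class tables in which every class has arity 1 except one distinguished class Z of arity 0, the subtyping relation and the subtyping-machine execution agree: C₁C₂…C_m Z ⊑ D₁D₂…D_n Z holds if and only if the subtyping machine configuration (Z C_m … C₁ ◁ D₁ … D_n Z) admits a finite run reaching the halting configuration •. -/
/-- An inheritance rule for a unary class table: `lhs x ◁ rhs x` (if `usesVar = true`)
or `lhs x ◁ rhs Z` (if `usesVar = false`), where all class names in `rhs` are unary and
`Z` is the distinguished nullary class.  A ground type `C₁ C₂ … C_m Z` is represented by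
the word `[C₁, C₂, …, C_m]` (the trailing `Z` is implicit). -/
structure URule (C : Type*) : Type _ where
  lhs : C
  rhs : List C
  usesVar : Bool

variable {C : Type*}

/-- The inheritance relation `◁` on ground types (words over unary class names, with the
trailing `Z` implicit), induced by a unary class table: `C w ◁ rhs[x := w]`. -/
def UInh (table : Set (URule C)) (w w' : List C) : Prop :=
  ∃ r ∈ table, ∃ u : List C,
    w = r.lhs :: u ∧ w' = r.rhs ++ (if r.usesVar then u else [])

/-- `◁*`, the reflexive transitive closure of the inheritance relation. -/
def UInhStar (table : Set (URule C)) : List C → List C → Prop :=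
  Relation.ReflTransGen (UInh table)

/-- Contravariant subtyping specialized to unary class tables:
`C₁…C_m Z ⊑ Z` iff `C₁…C_m Z ◁* Z`, and
`C₁…C_m Z ⊑ D₁ D₂…D_n Z` iff `C₁…C_m Z ◁* D₁ E₂…E_p Z` for some `E₂…E_p` with
`D₂…D_n Z ⊑ E₂…E_p Z` (note the contravariant flip). -/
inductive USub (table : Set (URule C)) : List C → List C → Prop
  | nil {w : List C} : UInhStar table w [] → USub table w []
  | cons {w e ds : List C} {d : C} :
      UInhStar table w (d :: e) → USub table ds e → USub table w (d :: ds)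

/-- A configuration of the subtyping machine: `some (w, w')` represents
`Z (reverse w) ◁ w' Z` (equivalently its mirrored `▷` form), i.e. the pending query
`w Z ⊑ w' Z`; `none` is the halting configuration `•`. -/
abbrev UConfig (C : Type*) := Option (List C × List C)

/-- Execution steps of the subtyping machine:
`(Z C_m…C₁ ◁ Z) ⇝ •` if `C₁…C_m Z ◁* Z`, and
`(Z C_m…C₁ ◁ D₁…D_n Z) ⇝ (Z E_p…E₂ ▷ D₂…D_n Z)` if `C₁…C_m Z ◁* D₁ E₂…E_p Z`
(the target being the mirror of `(Z D_n…D₂ ◁ E₂…E_p Z)`). -/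
inductive UStep (table : Set (URule C)) : UConfig C → UConfig C → Prop
  | halt {w : List C} : UInhStar table w [] → UStep table (some (w, [])) none
  | move {w e ds : List C} {d : C} :
      UInhStar table w (d :: e) → UStep table (some (w, d :: ds)) (some (ds, e))

/-- **Subtyping agrees with the subtyping machine**: for unary class tables (all classes
of arity 1, except the distinguished nullary class `Z`),
`C₁C₂…C_m Z ⊑ D₁D₂…D_n Z` holds iff the machine configuration `(Z C_m…C₁ ◁ D₁…D_n Z)`
admits a finite run reaching the halting configuration `•`. -/
theorem usub_iff_machine_halts (table : Set (URule C)) (w w' : List C) :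
    USub table w w' ↔
      Relation.ReflTransGen (UStep table) (some (w, w')) none := by
  constructor
  · intro h
    induction h with
    | nil h => exact Relation.ReflTransGen.single (UStep.halt h)
    | cons h _ ih => exact Relation.ReflTransGen.head (UStep.move h) ih
  · intro h
    have key : ∀ c : UConfig C, Relation.ReflTransGen (UStep table) c none →
        ∀ w w', c = some (w, w') → USub table w w' := by
      intro c hc
      induction hc using Relation.ReflTransGen.head_induction_on with
      | refl => intro w w' h; exact absurd h (by simp)
      | head step _ ih =>
        intro w w' heq
        subst heq
        cases step with
        | halt h => exact USub.nil h
        | move h => exact USub.cons h (ih _ _ rfl)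
    exact key _ h w w' rfl
end

section
/- If a class table forbids multiple instantiation inheritance (i.e., whenever t ◁* C t₁…t_m and t ◁* C t'₁…t'_m, then t_i = t'_i for all i), then the induced subtyping machine is deterministic: from every configuration at most one execution step is enabled. -/
variable {C : Type*}

/-- **Determinism**: if the class table forbids multiple instantiation inheritance
(whenever `t ◁* C t₁` and `t ◁* C t'₁` then `t₁ = t'₁`), then the induced subtyping
machine is deterministic: from every configuration at most one step is enabled. -/
theorem machine_deterministic (table : Set (URule C))
    (hMII : ∀ (w : List C) (c : C) (u u' : List C),
      UInhStar table w (c :: u) → UInhStar table w (c :: u') → u = u')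
    (cfg cfg₁ cfg₂ : UConfig C)
    (h₁ : UStep table cfg cfg₁) (h₂ : UStep table cfg cfg₂) :
    cfg₁ = cfg₂ := by
  cases h₁ with
  | halt _ => cases h₂ with
    | halt _ => rfl
  | move hm₁ => cases h₂ with
    | move hm₂ => rw [hMII _ _ _ _ hm₁ hm₂]
end

section
/- The CYK relation correctly characterizes membership: for a context-free grammar G with start symbol S and a terminal string α, α is in the language of G if and only if cyk(α, S) holds, where cyk is the least relation with cyk(a, a) for each terminal a, and cyk(α, A) whenever A → θ₁…θ_n is a production, α = α₁…α_n, and cyk(α_k, θ_k) for all k. -/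
/-- The CYK relation of a context-free grammar: the least relation with `cyk(a, a)` for
each terminal `a`, and `cyk(α, A)` whenever `A → θ₁…θ_n` is a production,
`α = α₁…α_n`, and `cyk(α_k, θ_k)` for all `k`. -/
inductive Cyk {T : Type} (g : ContextFreeGrammar T) :
    List T → Symbol T g.NT → Prop
  | term (a : T) : Cyk g [a] (.terminal a)
  | prod {r : ContextFreeRule T g.NT} {αs : List (List T)} :
      r ∈ g.rules →
      List.Forall₂ (Cyk g) αs r.output →
      Cyk g αs.flatten (.nonterminal r.input)

private lemma forall₂_append_split {α β : Type*} {R : α → β → Prop} :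
    ∀ {l₁ l₂ : List β} {as : List α}, List.Forall₂ R as (l₁ ++ l₂) →
      ∃ as₁ as₂, as = as₁ ++ as₂ ∧ List.Forall₂ R as₁ l₁ ∧ List.Forall₂ R as₂ l₂
  | [], l₂, as, h => ⟨[], as, rfl, List.Forall₂.nil, h⟩
  | b :: l₁, l₂, as, h => by
    rw [List.cons_append, List.forall₂_cons_right_iff] at h
    obtain ⟨a, as', hab, h', rfl⟩ := h
    obtain ⟨as₁, as₂, rfl, h₁, h₂⟩ := forall₂_append_split h'
    exact ⟨a :: as₁, as₂, rfl, List.Forall₂.cons hab h₁, h₂⟩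

private lemma cyk_derives {T : Type} {g : ContextFreeGrammar T} :
    ∀ {α : List T} {s : Symbol T g.NT}, Cyk g α s →
      g.Derives [s] (α.map Symbol.terminal) := by
  intro α s h
  refine Cyk.rec (motive_1 := fun α s _ => g.Derives [s] (α.map Symbol.terminal))
    (motive_2 := fun αs θs _ => g.Derives θs (αs.flatten.map Symbol.terminal))
    ?_ ?_ ?_ ?_ h
  · intro a; rfl
  · intro r αs hr _ ih
    exact (ContextFreeGrammar.Produces.single
      ⟨r, hr, ContextFreeRule.rewrites_iff.mpr ⟨[], [], by simp, by simp⟩⟩).trans ih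
  · rfl
  · intro β θ βs θs _ _ ih ih'
    have h1 : g.Derives ([θ] ++ θs) ((β.map Symbol.terminal) ++ θs) :=
      ih.append_right θs
    have h2 : g.Derives ((β.map Symbol.terminal) ++ θs)
        ((β.map Symbol.terminal) ++ (βs.flatten.map Symbol.terminal)) :=
      ih'.append_left _
    simpa using h1.trans h2

private lemma derives_cyk {T : Type} {g : ContextFreeGrammar T} {α : List T} :
    ∀ {u : List (Symbol T g.NT)}, g.Derives u (α.map Symbol.terminal) →
      ∃ αs, α = List.flatten αs ∧ List.Forall₂ (Cyk g) αs u := by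
  intro u h
  induction h using Relation.ReflTransGen.head_induction_on with
  | refl =>
    refine ⟨α.map (fun a => [a]), by induction α with | nil => rfl | cons a l ih => simpa using ih, ?_⟩
    rw [List.forall₂_map_left_iff, List.forall₂_map_right_iff]
    exact List.forall₂_same.mpr fun a _ => Cyk.term a -- FIX51
  | head hstep _ ih =>
    obtain ⟨r, hr, hrw⟩ := hstep
    obtain ⟨p, q, rfl, rfl⟩ := hrw.exists_parts
    obtain ⟨αs, rfl, hf⟩ := ih
    obtain ⟨as₁, as', rfl, h₁, h'⟩ := forall₂_append_split (l₁ := p) (by simpa using hf)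
    obtain ⟨as₂, as₃, rfl, h₂, h₃⟩ := forall₂_append_split (l₁ := r.output) h'
    refine ⟨as₁ ++ [as₂.flatten] ++ as₃, by simp, ?_⟩
    exact List.rel_append (List.rel_append h₁
      (List.Forall₂.cons (Cyk.prod hr h₂) List.Forall₂.nil)) h₃

/-- **Correctness of the CYK relation**: a terminal string is in the language of `G`
iff `cyk(α, S)` holds for the start symbol `S`. -/
theorem cyk_correct {T : Type} (g : ContextFreeGrammar T) (α : List T) :
    α ∈ g.language ↔ Cyk g α (.nonterminal g.initial) := by
  rw [ContextFreeGrammar.mem_language_iff]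
  constructor
  · intro h
    obtain ⟨αs, rfl, hf⟩ := derives_cyk h
    rw [List.forall₂_cons_right_iff] at hf
    obtain ⟨a, as', hc, hnil, rfl⟩ := hf
    rw [List.forall₂_nil_right_iff] at hnil
    subst hnil
    simpa using hc
  · exact cyk_derives
end

section
/- Each middle-of-tape rewriting step of the subtyping machine simulates a local rewriting on words: if the class table contains a rule Q x ◁ S N Q' S₂ N S₁ N x, then for all words α, β, the configuration (α Q ◁ S N β) evolves in exactly two deterministic steps to (α N S₁ N S₂ Q' ◁ β); ignoring N-padding, this rewrites Q·S into S₁·S₂·Q' with the head passing over the processed symbol. -/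
variable {C : Type*}

/-- `n`-fold composition of a step relation. -/
def StepN (R : α → α → Prop) : ℕ → α → α → Prop
  | 0 => Eq
  | n + 1 => fun a c => ∃ b, R a b ∧ StepN R n b c

/-- **Middle-of-tape rewriting**: if the class table contains the rule
`Q x ◁ S N Q' S₂ N S₁ N x` (and forbids multiple instantiation inheritance, so that the
machine is deterministic), then for all words `α`, `β` the configuration `(α Q ◁ S N β)`
evolves in exactly two deterministic steps to `(α N S₁ N S₂ Q' ◁ β)`: ignoring the
`N`-padding, `Q·S` is rewritten to `S₁·S₂·Q'`, the head passing over the processed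
symbol. -/
theorem middle_rewrite (table : Set (URule C)) (Q Q' S S₁ S₂ N : C)
    (hrule : (⟨Q, [S, N, Q', S₂, N, S₁, N], true⟩ : URule C) ∈ table)
    (hMII : ∀ (w : List C) (c : C) (u u' : List C),
      UInhStar table w (c :: u) → UInhStar table w (c :: u') → u = u')
    (α β : List C) :
    StepN (UStep table) 2 (some (Q :: α, S :: N :: β))
        (some ([Q', S₂, N, S₁, N] ++ α, β)) ∧
    ∀ cfg : UConfig C,
      StepN (UStep table) 2 (some (Q :: α, S :: N :: β)) cfg →
      cfg = some ([Q', S₂, N, S₁, N] ++ α, β) := by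
  have h1 : UInhStar table (Q :: α) (S :: (N :: Q' :: S₂ :: N :: S₁ :: N :: α)) := by
    apply Relation.ReflTransGen.single
    exact ⟨_, hrule, α, rfl, rfl⟩
  have h2 : UInhStar table (N :: β) (N :: β) := Relation.ReflTransGen.refl
  constructor
  · exact ⟨_, UStep.move h1, _, UStep.move h2, rfl⟩
  · rintro cfg ⟨b, hb, c, hc, rfl⟩
    cases hb with
    | move h1' =>
      have := hMII _ _ _ _ h1 h1'
      subst this
      cases hc with
      | move h2' =>
        have := hMII _ _ _ _ h2 h2'
        subst this
        rfl
end
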